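/- Let A = {u₁, …, u_m} be a set of m distinct unit vectors in ℝⁿ containing no simplicial family of size 3 or greater, and suppose c₁u₁ + ⋯ + c_m u_m = 0 for some real numbers c₁, …, c_m > 0. Then m = 2s for some integer s ≤ n, and there exist linearly independent unit vectors v₁, …, v_s such that A = {±v₁, …, ±v_s}. -/

import Mathlib

open scoped Pointwise RealInnerProductSpace
noncomputable section

/-- Abbreviation for n-dimensional Euclidean space. -/
abbrev Euc (n : ℕ) := EuclideanSpace ℝ (Fin n)

/-- The translate K + v of a set K by a vector v. -/
def transl {n : ℕ} (K : Set (Euc n)) (v : Euc n) : Set (Euc n) := (fun x => x + v) '' K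

/-- Orthogonal projection of a set onto a subspace ξ, viewed inside the ambient space. -/
def projSet {n : ℕ} (ξ : Submodule ℝ (Euc n)) (K : Set (Euc n)) : Set (Euc n) :=
  (fun x => (Submodule.orthogonalProjection ξ x : Euc n)) '' K

/-- A simplicial family of size m+1: distinct unit vectors spanning an m-dimensional
subspace, some positive combination of which vanishes (the outer unit normals of an
m-dimensional simplex). -/
def SimplicialFamily {n : ℕ} (m : ℕ) (u : Fin (m + 1) → Euc n) : Prop :=
  Function.Injective u ∧ (∀ i, ‖u i‖ = 1) ∧
    Module.finrank ℝ (Submodule.span ℝ (Set.range u)) = m ∧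
    ∃ c : Fin (m + 1) → ℝ, (∀ i, 0 < c i) ∧ ∑ i, c i • u i = 0

/-- L is d-reliable: whenever every projection of L onto a d-dimensional subspace contains
a translate of the corresponding projection of a compact convex set K, L contains a
translate of K. -/
def DReliable {n : ℕ} (d : ℕ) (L : Set (Euc n)) : Prop :=
  ∀ K : Set (Euc n), IsCompact K → Convex ℝ K → K.Nonempty →
    (∀ ξ : Submodule ℝ (Euc n), Module.finrank ℝ ξ = d →
      ∃ w, transl (projSet ξ K) w ⊆ projSet ξ L) →
    ∃ v, transl K v ⊆ L

/-- x is a regular boundary point of L: exactly one outer unit normal at x. -/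
def IsRegularPoint {n : ℕ} (L : Set (Euc n)) (x : Euc n) : Prop :=
  x ∈ frontier L ∧ ∃! u : Euc n, ‖u‖ = 1 ∧ ∀ y ∈ L, ⟪y - x, u⟫ ≤ 0

/-- u is the (unique) outer unit normal to L at the regular boundary point x. -/
def IsNormalAtRegularPoint {n : ℕ} (L : Set (Euc n)) (x u : Euc n) : Prop :=
  x ∈ frontier L ∧ ‖u‖ = 1 ∧ (∀ y ∈ L, ⟪y - x, u⟫ ≤ 0) ∧
    ∀ w : Euc n, ‖w‖ = 1 → (∀ y ∈ L, ⟪y - x, w⟫ ≤ 0) → w = u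

/-- The support set of P in direction u. -/
def supportSet {n : ℕ} (P : Set (Euc n)) (u : Euc n) : Set (Euc n) :=
  {x ∈ P | ∀ y ∈ P, ⟪y, u⟫ ≤ ⟪x, u⟫}

/-- u is an outer unit facet normal of P: the support set of P in direction u is a face of
codimension 1 in the affine hull of P. -/
def IsFacetNormal {n : ℕ} (P : Set (Euc n)) (u : Euc n) : Prop :=
  ‖u‖ = 1 ∧ Module.finrank ℝ (vectorSpan ℝ (supportSet P u)) + 1
      = Module.finrank ℝ (vectorSpan ℝ P)

/-- S is a k-dimensional simplex: the convex hull of k+1 affinely independent points. -/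
def IsSimplexOfDim {n : ℕ} (k : ℕ) (S : Set (Euc n)) : Prop :=
  ∃ p : Fin (k + 1) → Euc n, AffineIndependent ℝ p ∧ S = convexHull ℝ (Set.range p)

/-- C is d-decomposable: a direct Minkowski sum of at least two nonempty compact convex
sets lying in complementary subspaces of dimension at most d. -/
def DDecomposable {n : ℕ} (d : ℕ) (C : Set (Euc n)) : Prop :=
  ∃ (m : ℕ) (ξ : Fin m → Submodule ℝ (Euc n)) (Cs : Fin m → Set (Euc n)),
    2 ≤ m ∧ iSupIndep ξ ∧ (⨆ i, ξ i) = ⊤ ∧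
    (∀ i, Module.finrank ℝ (ξ i) ≤ d) ∧
    (∀ i, (Cs i).Nonempty ∧ IsCompact (Cs i) ∧ Convex ℝ (Cs i) ∧ Cs i ⊆ (ξ i : Set (Euc n))) ∧
    C = ∑ i, Cs i

/-- C is a d-decomposable orthogonal simplex product: a direct Minkowski sum of simplices of
dimension at most d lying in mutually orthogonal complementary subspaces of dimension at
most d. -/
def OrthSimplexProduct {n : ℕ} (d : ℕ) (C : Set (Euc n)) : Prop :=
  ∃ (m : ℕ) (ξ : Fin m → Submodule ℝ (Euc n)) (Cs : Fin m → Set (Euc n)),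
    2 ≤ m ∧ iSupIndep ξ ∧ (⨆ i, ξ i) = ⊤ ∧
    (∀ i, Module.finrank ℝ (ξ i) ≤ d) ∧
    (∀ i j, i ≠ j → ∀ x ∈ ξ i, ∀ y ∈ ξ j, ⟪x, y⟫ = 0) ∧
    (∀ i, Cs i ⊆ (ξ i : Set (Euc n)) ∧ ∃ k ≤ d, IsSimplexOfDim k (Cs i)) ∧
    C = ∑ i, Cs i

lemma cone_caratheodory {E : Type*} [AddCommGroup E] [Module ℝ E]
    (S : Finset E) (c : E → ℝ) (hc : ∀ y ∈ S, 0 ≤ c y) (x : E)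
    (hx : x = ∑ y ∈ S, c y • y) :
    ∃ T : Finset E, T ⊆ S ∧ LinearIndependent ℝ (fun y : (T : Set E) => (y : E)) ∧
      ∃ d : E → ℝ, (∀ y ∈ T, 0 < d y) ∧ x = ∑ y ∈ T, d y • y := by
  classical
  induction S using Finset.strongInduction generalizing c with
  | _ S ih =>
  by_cases hzero : ∃ y ∈ S, c y = 0
  · obtain ⟨y₀, hy₀S, hy₀⟩ := hzero
    obtain ⟨T, hTsub, hTli, d, hd, hxd⟩ := ih (S.erase y₀) (Finset.erase_ssubset hy₀S) c
      (fun y hy => hc y (Finset.mem_of_mem_erase hy))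
      (by rw [Finset.sum_erase _ (by rw [hy₀, zero_smul])]; exact hx)
    exact ⟨T, hTsub.trans (Finset.erase_subset _ _), hTli, d, hd, hxd⟩
  · push_neg at hzero
    have hcpos : ∀ y ∈ S, 0 < c y := fun y hy => (hc y hy).lt_of_ne' (hzero y hy)
    by_cases hli : LinearIndependent ℝ (fun y : (S : Set E) => (y : E))
    · exact ⟨S, le_refl _, hli, c, hcpos, hx⟩
    · rw [Fintype.not_linearIndependent_iff] at hli
      obtain ⟨g, hgsum, i₀, hgi₀⟩ := hli
      set g' : E → ℝ := fun y => if h : y ∈ S then g ⟨y, h⟩ else 0 with hg'def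
      have hg'0 : ∑ y ∈ S, g' y • y = 0 := by
        rw [← Finset.sum_coe_sort S (fun y => g' y • y), ← hgsum]
        exact Finset.sum_congr rfl (fun i _ => by simp [hg'def, i.2])
      have key : ∀ G : E → ℝ, (∑ y ∈ S, G y • y = 0) → (∃ y ∈ S, 0 < G y) →
          ∃ T : Finset E, T ⊆ S ∧ LinearIndependent ℝ (fun y : (T : Set E) => (y : E)) ∧
            ∃ d : E → ℝ, (∀ y ∈ T, 0 < d y) ∧ x = ∑ y ∈ T, d y • y := by
        intro G hG0 hpos
        have hQne : (S.filter (fun y => 0 < G y)).Nonempty := by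
          obtain ⟨y, hy, hg⟩ := hpos; exact ⟨y, Finset.mem_filter.2 ⟨hy, hg⟩⟩
        obtain ⟨y₁, hy₁Q, hy₁min⟩ :=
          Finset.exists_min_image (S.filter (fun y => 0 < G y)) (fun y => c y / G y) hQne
        have hy₁S : y₁ ∈ S := (Finset.mem_filter.1 hy₁Q).1
        have hGy₁ : 0 < G y₁ := (Finset.mem_filter.1 hy₁Q).2
        set l := c y₁ / G y₁ with hl
        have hl0 : 0 ≤ l := div_nonneg (hc y₁ hy₁S) hGy₁.le
        set c' : E → ℝ := fun y => c y - l * G y with hc'def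
        have hc'nn : ∀ y ∈ S, 0 ≤ c' y := by
          intro y hy
          by_cases hgy : 0 < G y
          · have h1 : l ≤ c y / G y := hy₁min y (Finset.mem_filter.2 ⟨hy, hgy⟩)
            have h2 : l * G y ≤ c y := by
              rw [← le_div_iff₀ hgy]; exact h1
            simp only [hc'def]; linarith
          · push_neg at hgy
            have := hc y hy
            simp only [hc'def]
            nlinarith
        have hc'y₁ : c' y₁ = 0 := by
          simp only [hc'def, hl]
          field_simp
          ring
        have hx' : x = ∑ y ∈ S, c' y • y := by
          simp only [hc'def, sub_smul, Finset.sum_sub_distrib, mul_smul]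
          rw [← Finset.smul_sum, hG0, smul_zero, sub_zero]; exact hx
        obtain ⟨T, hTsub, hTli, d, hd, hxd⟩ := ih (S.erase y₁) (Finset.erase_ssubset hy₁S) c'
          (fun y hy => hc'nn y (Finset.mem_of_mem_erase hy))
          (by rw [Finset.sum_erase _ (by rw [hc'y₁, zero_smul])]; exact hx')
        exact ⟨T, hTsub.trans (Finset.erase_subset _ _), hTli, d, hd, hxd⟩
      by_cases hpos : ∃ y ∈ S, 0 < g' y
      · exact key g' hg'0 hpos
      · refine key (fun y => -(g' y)) (by simp only [neg_smul, Finset.sum_neg_distrib, hg'0, neg_zero]) ?_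
        push_neg at hpos
        refine ⟨i₀, i₀.2, ?_⟩
        have h1 : g' (i₀ : E) = g i₀ := by simp [hg'def, i₀.2]
        have h2 : g' (i₀ : E) ≤ 0 := hpos _ i₀.2
        have h3 : g' (i₀ : E) ≠ 0 := by rw [h1]; exact hgi₀
        simp only [neg_pos]
        exact lt_of_le_of_ne h2 h3

lemma antipode_mem {n m : ℕ} (u : Fin m → Euc n) (hunit : ∀ i, ‖u i‖ = 1)
    (hnosimp : ∀ (k : ℕ) (v : Fin (k + 1) → Euc n), 2 ≤ k →
      (∀ i, v i ∈ Set.range u) → ¬ SimplicialFamily k v)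
    (W : Finset (Euc n)) (hWsub : (W : Set (Euc n)) ⊆ Set.range u)
    (b : Euc n → ℝ) (hb : ∀ y ∈ W, 0 < b y) (hsum : ∑ y ∈ W, b y • y = 0)
    (w₀ : Euc n) (hw₀ : w₀ ∈ W) : -w₀ ∈ W := by
  classical
  have hWu : ∀ y ∈ W, ‖y‖ = 1 := by
    intro y hy; obtain ⟨i, rfl⟩ := hWsub hy; exact hunit i
  have hbw₀ : 0 < b w₀ := hb w₀ hw₀
  have hrep : -w₀ = ∑ y ∈ W.erase w₀, (b y / b w₀) • y := by
    have h2 : ∑ y ∈ W.erase w₀, b y • y = -(b w₀ • w₀) := by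
      rw [Finset.sum_erase_eq_sub hw₀, hsum, zero_sub]
    calc -w₀ = (b w₀)⁻¹ • (-(b w₀ • w₀)) := by
            rw [smul_neg, smul_smul, inv_mul_cancel₀ hbw₀.ne', one_smul]
      _ = (b w₀)⁻¹ • ∑ y ∈ W.erase w₀, b y • y := by rw [h2]
      _ = ∑ y ∈ W.erase w₀, (b y / b w₀) • y := by
            rw [Finset.smul_sum]
            exact Finset.sum_congr rfl fun y _ => by rw [smul_smul, div_eq_inv_mul]
  obtain ⟨T, hTsub, hTli, d, hdpos, hxd⟩ := cone_caratheodory (W.erase w₀)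
    (fun y => b y / b w₀)
    (fun y hy => div_nonneg (hb y (Finset.mem_of_mem_erase hy)).le hbw₀.le) (-w₀) hrep
  have hTW : T ⊆ W := hTsub.trans (Finset.erase_subset _ _)
  -- case on the cardinality of T
  rcases Nat.lt_or_ge T.card 2 with hcard | hcard
  · interval_cases h : T.card
    · exfalso
      rw [Finset.card_eq_zero.1 h, Finset.sum_empty] at hxd
      have : ‖w₀‖ = 1 := hWu w₀ hw₀
      rw [neg_eq_zero] at hxd
      rw [hxd, norm_zero] at this; norm_num at this
    · obtain ⟨t, ht⟩ := Finset.card_eq_one.1 h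
      rw [ht, Finset.sum_singleton] at hxd
      have htT : t ∈ T := by rw [ht]; exact Finset.mem_singleton_self t
      have hdt : 0 < d t := hdpos t htT
      have hnt : ‖t‖ = 1 := hWu t (hTW htT)
      have : d t = 1 := by
        have := congrArg norm hxd
        rw [norm_neg, hWu w₀ hw₀, norm_smul, hnt, Real.norm_eq_abs,
          abs_of_pos hdt, mul_one] at this
        exact this.symm
      rw [this, one_smul] at hxd
      rw [hxd]
      exact hTW htT
  · exfalso
    -- build a simplicial family of size T.card + 1
    set t := T.card with htdef
    set g : Fin t → Euc n := fun i => ((T.equivFin.symm i : T) : Euc n) with hgdef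
    have hgT : ∀ i, g i ∈ T := fun i => (T.equivFin.symm i).2
    have hginj : Function.Injective g :=
      Subtype.val_injective.comp T.equivFin.symm.injective
    have hgrange : Set.range g = (T : Set (Euc n)) := by
      ext y
      constructor
      · rintro ⟨i, rfl⟩; exact hgT i
      · intro hy; exact ⟨T.equivFin ⟨y, hy⟩, by simp [hgdef]⟩
    have hw₀T : w₀ ∉ (T : Set (Euc n)) := fun h =>
      Finset.notMem_erase w₀ W (hTsub h)
    set v : Fin (t + 1) → Euc n := Fin.cons w₀ g with hvdef
    have hsumT : ∑ i : Fin t, d (g i) • g i = ∑ y ∈ T, d y • y := by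
      rw [← Finset.sum_coe_sort T (fun y => d y • y)]
      exact (Equiv.sum_comp T.equivFin.symm (fun y : T => d (y : Euc n) • (y : Euc n)))
    have hw₀span : w₀ ∈ Submodule.span ℝ (T : Set (Euc n)) := by
      have : -w₀ ∈ Submodule.span ℝ (T : Set (Euc n)) := by
        rw [hxd]
        exact Submodule.sum_mem _ fun y hy =>
          Submodule.smul_mem _ _ (Submodule.subset_span hy)
      simpa using Submodule.neg_mem _ this
    apply hnosimp t v hcard
    · intro i
      refine Fin.cases ?_ ?_ i
      · exact hWsub hw₀
      · intro j
        exact hWsub (hTW (hgT j))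
    · refine ⟨?_, ?_, ?_, ?_⟩
      · exact Fin.cons_injective_iff.2 ⟨by rw [hgrange]; exact hw₀T, hginj⟩
      · intro i
        refine Fin.cases ?_ ?_ i
        · exact hWu w₀ hw₀
        · intro j; exact hWu _ (hTW (hgT j))
      · rw [show Set.range v = insert w₀ (Set.range g) from Fin.range_cons w₀ g, hgrange,
          Submodule.span_insert_eq_span hw₀span]
        exact finrank_span_finset_eq_card hTli
      · refine ⟨Fin.cons 1 (fun i => d (g i)), ?_, ?_⟩
        · intro i
          refine Fin.cases ?_ ?_ i
          · norm_num
          · intro j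
            simpa using hdpos _ (hgT j)
        · have : ∑ i : Fin (t+1), (Fin.cons 1 (fun i => d (g i)) : Fin (t+1) → ℝ) i • v i
              = 1 • w₀ + ∑ i : Fin t, d (g i) • g i := by
            rw [hvdef, Fin.sum_univ_succ]
            simp [Fin.cons]
          rw [this, hsumT, ← hxd, one_smul]
          simp


open scoped Classical in
lemma half_of_neg_closed {n : ℕ} (S : Finset (Euc n)) (hneg : ∀ x ∈ S, -x ∈ S)
    (hnf : ∀ x ∈ S, -x ≠ x) :
    ∃ V : Finset (Euc n), V ⊆ S ∧ S.card = 2 * V.card ∧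
      S = V ∪ V.image (fun x => -x) ∧ (∀ x ∈ V, -x ∉ V) := by
  classical
  induction S using Finset.strongInduction with
  | _ S ih =>
  rcases S.eq_empty_or_nonempty with rfl | ⟨x, hx⟩
  · exact ⟨∅, by simp⟩
  · have hnegx : -x ∈ S := hneg x hx
    have hxne : -x ≠ x := hnf x hx
    set S' := (S.erase x).erase (-x) with hS'
    have hmem' : ∀ y, y ∈ S' ↔ y ∈ S ∧ y ≠ x ∧ y ≠ -x := by
      intro y
      simp only [hS', Finset.mem_erase]
      tauto
    have hsub : S' ⊂ S := by
      refine Finset.ssubset_iff_of_subset (fun y hy => ((hmem' y).1 hy).1) |>.2 ⟨x, hx, ?_⟩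
      rw [hmem']; tauto
    have hneg' : ∀ y ∈ S', -y ∈ S' := by
      intro y hy
      rw [hmem'] at hy ⊢
      obtain ⟨hyS, hy1, hy2⟩ := hy
      refine ⟨hneg y hyS, ?_, ?_⟩
      · intro h; apply hy2; rw [← h]; simp
      · intro h; apply hy1; exact neg_injective h
    have hnf' : ∀ y ∈ S', -y ≠ y := fun y hy => hnf y ((hmem' y).1 hy).1
    obtain ⟨V', hV'sub, hV'card, hV'union, hV'anti⟩ := ih S' hsub hneg' hnf'
    have hxS' : x ∉ S' := by rw [hmem']; tauto
    have hnxS' : -x ∉ S' := by rw [hmem']; tauto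
    have hxV' : x ∉ V' := fun h => hxS' (hV'sub h)
    refine ⟨insert x V', ?_, ?_, ?_, ?_⟩
    · intro y hy
      rcases Finset.mem_insert.1 hy with rfl | hy
      · exact hx
      · exact ((hmem' y).1 (hV'sub hy)).1
    · have h1 : (S.erase x).card = S.card - 1 := Finset.card_erase_of_mem hx
      have h2 : S'.card = (S.erase x).card - 1 :=
        Finset.card_erase_of_mem (Finset.mem_erase.2 ⟨hxne, hnegx⟩)
      have h3 : 2 ≤ S.card := by
        have := Finset.one_lt_card.2 ⟨x, hx, -x, hnegx, (Ne.symm hxne)⟩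
        omega
      rw [Finset.card_insert_of_notMem hxV']
      omega
    · ext y
      simp only [Finset.mem_union, Finset.mem_insert, Finset.mem_image]
      constructor
      · intro hyS
        by_cases h1 : y = x
        · tauto
        by_cases h2 : y = -x
        · exact Or.inr ⟨x, Or.inl rfl, h2.symm⟩
        · have : y ∈ S' := (hmem' y).2 ⟨hyS, h1, h2⟩
          rw [hV'union] at this
          rcases Finset.mem_union.1 this with h | h
          · tauto
          · obtain ⟨z, hz, hzy⟩ := Finset.mem_image.1 h
            exact Or.inr ⟨z, Or.inr hz, hzy⟩
      · rintro (⟨rfl | hy⟩ | ⟨z, hz, rfl⟩)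
        · exact hx
        · exact ((hmem' y).1 (hV'sub hy)).1
        · rcases hz with rfl | hz
          · exact hnegx
          · have hzs : -z ∈ S' := by
              rw [hV'union]
              exact Finset.mem_union_right _ (Finset.mem_image_of_mem _ hz)
            exact ((hmem' _).1 hzs).1
    · intro y hy
      rcases Finset.mem_insert.1 hy with rfl | hy
      · intro h
        rcases Finset.mem_insert.1 h with h1 | h1
        · exact hxne h1
        · exact hnxS' (hV'sub h1)
      · intro h
        rcases Finset.mem_insert.1 h with h1 | h1
        · apply hnxS'
          have hyx : y = -x := by rw [← h1]; simp
          rw [← hyx]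
          exact hV'sub hy
        · exact hV'anti y hy h1

/-- If a family of m distinct unit vectors contains no simplicial family of size 3 or
greater, while some positive combination of its members vanishes, then m = 2s with s ≤ n
and the family consists of s antipodal pairs ±v₁, …, ±v_s of linearly independent
vectors. -/
theorem no_simplicial_three_antipodal {n m : ℕ} (u : Fin m → Euc n)
    (hinj : Function.Injective u) (hunit : ∀ i, ‖u i‖ = 1)
    (hnosimp : ∀ (k : ℕ) (v : Fin (k + 1) → Euc n), 2 ≤ k →
      (∀ i, v i ∈ Set.range u) → ¬ SimplicialFamily k v)
    (c : Fin m → ℝ) (hc : ∀ i, 0 < c i) (hsum : ∑ i, c i • u i = 0) :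
    ∃ s : ℕ, s ≤ n ∧ m = 2 * s ∧
      ∃ v : Fin s → Euc n, LinearIndependent ℝ v ∧ (∀ i, ‖v i‖ = 1) ∧
        Set.range u = Set.range v ∪ Set.range (fun i => -(v i)) := by
  classical
  set R : Finset (Euc n) := Finset.univ.image u with hR
  have hRrange : (R : Set (Euc n)) = Set.range u := by simp [hR]
  have hRcard : R.card = m := by
    rw [hR, Finset.card_image_of_injective _ hinj, Finset.card_univ, Fintype.card_fin]
  -- a positive coefficient function on R summing to zero
  set b : Euc n → ℝ := fun y => if h : ∃ i, u i = y then c h.choose else 1 with hbdef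
  have hbu : ∀ i, b (u i) = c i := by
    intro i
    have h : ∃ j, u j = u i := ⟨i, rfl⟩
    simp only [hbdef, dif_pos h]
    exact congrArg c (hinj h.choose_spec)
  have hbpos : ∀ y, 0 < b y := by
    intro y
    simp only [hbdef]
    split
    · exact hc _
    · norm_num
  have hbsum : ∑ y ∈ R, b y • y = 0 := by
    rw [hR, Finset.sum_image (fun i _ j _ h => hinj h)]
    simp only [hbu]
    exact hsum
  have hRneg : ∀ y ∈ R, -y ∈ R := fun y hy =>
    antipode_mem u hunit hnosimp R (hRrange ▸ subset_rfl) b (fun z _ => hbpos z) hbsum y hy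
  have hRunit : ∀ y ∈ R, ‖y‖ = 1 := by
    intro y hy
    have : y ∈ Set.range u := hRrange ▸ hy
    obtain ⟨i, rfl⟩ := this
    exact hunit i
  have hRnf : ∀ y ∈ R, -y ≠ y := by
    intro y hy h
    have hy0 : y = 0 := by
      have h2 : (2 : ℝ) • y = 0 := by
        rw [two_smul]
        exact neg_eq_iff_add_eq_zero.1 h
      simpa using h2
    have := hRunit y hy
    rw [hy0, norm_zero] at this
    norm_num at this
  obtain ⟨V, hVS, hcard2, hunion, hnoanti⟩ := half_of_neg_closed R hRneg hRnf
  set s := V.card with hsdef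
  set v : Fin s → Euc n := fun i => ((V.equivFin.symm i : V) : Euc n) with hvdef
  have hvV : ∀ i, v i ∈ V := fun i => (V.equivFin.symm i).2
  have hvinj : Function.Injective v :=
    Subtype.val_injective.comp V.equivFin.symm.injective
  have hvrange : Set.range v = (V : Set (Euc n)) := by
    ext y
    constructor
    · rintro ⟨i, rfl⟩; exact hvV i
    · intro hy; exact ⟨V.equivFin ⟨y, hy⟩, by simp [hvdef]⟩
  have hvR : ∀ i, v i ∈ R := fun i => hVS (hvV i)
  have hvunit : ∀ i, ‖v i‖ = 1 := fun i => hRunit _ (hvR i)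
  -- linear independence
  have hli : LinearIndependent ℝ v := by
    by_contra hdep
    rw [Fintype.not_linearIndependent_iff] at hdep
    obtain ⟨g, hg0, i₀, hi₀⟩ := hdep
    set sgn : Fin s → Euc n := fun i => if 0 < g i then v i else -(v i) with hsgndef
    set P : Finset (Fin s) := Finset.univ.filter (fun i => g i ≠ 0) with hPdef
    have hsgn_unit : ∀ i, ‖sgn i‖ = 1 := by
      intro i
      simp only [hsgndef]
      split
      · exact hvunit i
      · rw [norm_neg]; exact hvunit i
    have hinjP : ∀ i ∈ P, ∀ j ∈ P, sgn i = sgn j → i = j := by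
      intro i _ j _ hij
      by_contra hne
      have hvne : v i ≠ v j := fun h => hne (hvinj h)
      have h1 : v i ≠ -(v j) := by
        intro h
        exact hnoanti (v j) (hvV j) (h ▸ hvV i)
      have h2 : -(v i) ≠ v j := by
        intro h
        exact hnoanti (v i) (hvV i) (h.symm ▸ hvV j)
      have h3 : -(v i) ≠ -(v j) := fun h => hvne (neg_injective h)
      simp only [hsgndef] at hij
      split at hij <;> split at hij <;> [exact hvne hij; exact h1 hij;
        exact h2 hij; exact h3 hij]
    set W : Finset (Euc n) := P.image sgn with hWdef
    set bb : Euc n → ℝ := fun y => if h : ∃ i, i ∈ P ∧ sgn i = y then |g h.choose| else 1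
      with hbbdef
    have hbbsgn : ∀ i ∈ P, bb (sgn i) = |g i| := by
      intro i hi
      have h : ∃ j, j ∈ P ∧ sgn j = sgn i := ⟨i, hi, rfl⟩
      simp only [hbbdef, dif_pos h]
      have hspec := h.choose_spec
      rw [hinjP _ hspec.1 _ hi hspec.2]
    have hbbpos : ∀ y, 0 < bb y := by
      intro y
      simp only [hbbdef]
      split
      · next h =>
        have hspec := h.choose_spec
        have : g h.choose ≠ 0 := (Finset.mem_filter.1 hspec.1).2
        exact abs_pos.2 this
      · norm_num
    have hWsub : (W : Set (Euc n)) ⊆ Set.range u := by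
      rw [← hRrange]
      intro y hy
      obtain ⟨i, _, rfl⟩ := Finset.mem_image.1 (by exact_mod_cast hy)
      simp only [hsgndef]
      split
      · exact_mod_cast hvR i
      · exact_mod_cast hRneg _ (hvR i)
    have hWsum : ∑ y ∈ W, bb y • y = 0 := by
      rw [hWdef, Finset.sum_image hinjP]
      have : ∑ i ∈ P, bb (sgn i) • sgn i = ∑ i ∈ P, g i • v i := by
        refine Finset.sum_congr rfl fun i hi => ?_
        rw [hbbsgn i hi]
        have hgne : g i ≠ 0 := (Finset.mem_filter.1 hi).2
        simp only [hsgndef]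
        split
        · next h => rw [abs_of_pos h]
        · next h =>
          push_neg at h
          rw [abs_of_neg (lt_of_le_of_ne h hgne), smul_neg, neg_smul, neg_neg]
      rw [this, hPdef, Finset.sum_filter_of_ne (fun i _ h => by
        intro hgi; apply h; rw [hgi, zero_smul]), hg0]
    have hi₀P : i₀ ∈ P := Finset.mem_filter.2 ⟨Finset.mem_univ _, hi₀⟩
    have hw₀W : sgn i₀ ∈ W := Finset.mem_image_of_mem _ hi₀P
    have hnegmem : -(sgn i₀) ∈ W :=
      antipode_mem u hunit hnosimp W hWsub bb (fun z _ => hbbpos z) hWsum _ hw₀W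
    obtain ⟨j, hjP, hj⟩ := Finset.mem_image.1 hnegmem
    by_cases hji : j = i₀
    · subst hji
      have h0 : sgn j = 0 := by
        have h2 : (2 : ℝ) • sgn j = 0 := by
          rw [two_smul]
          linear_combination (norm := module) hj
        simpa using h2
      have := hsgn_unit j
      rw [h0, norm_zero] at this
      norm_num at this
    · have : v j = v i₀ ∨ v j = -(v i₀) ∨ -(v j) = v i₀ ∨ -(v j) = -(v i₀) := by
        simp only [hsgndef] at hj
        by_cases hgj : 0 < g j <;> by_cases hgi : 0 < g i₀
        · rw [if_pos hgj, if_pos hgi] at hj; exact Or.inr (Or.inl hj)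
        · rw [if_pos hgj, if_neg hgi, neg_neg] at hj; exact Or.inl hj
        · rw [if_neg hgj, if_pos hgi] at hj; exact Or.inr (Or.inr (Or.inr hj))
        · rw [if_neg hgj, if_neg hgi, neg_neg] at hj
          exact Or.inr (Or.inr (Or.inl hj))
      rcases this with h | h | h | h
      · exact hji (hvinj h)
      · exact hnoanti (v i₀) (hvV i₀) (h ▸ hvV j)
      · exact hnoanti (v j) (hvV j) (h.symm ▸ hvV i₀)
      · exact hji (hvinj (neg_injective h))
  refine ⟨s, ?_, ?_, v, hli, hvunit, ?_⟩
  · have := hli.fintype_card_le_finrank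
    simpa [finrank_euclideanSpace_fin] using this
  · omega
  · rw [← hRrange, hunion]
    rw [Finset.coe_union, Finset.coe_image, hvrange]
    congr 1
    rw [show (Set.range fun i => -(v i)) = (fun x => -x) '' Set.range v by
      rw [← Set.range_comp]; rfl, hvrange]
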